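/- Let (R, m) be an Artinian commutative local ring with residue field of cardinality q and with only finitely many ideals. Then for every positive integer i, |m^i| ≤ q^{N_i}, where N_i is the number of ideals of R contained in m^i. -/

import Mathlib

open IsLocalRing

/-- A simple module over a finite-residue-field local ring has cardinality `q`. -/
lemma simple_card (R : Type*) [CommRing R] [IsLocalRing R] (M : Type*) [AddCommGroup M]
    [Module R M] [IsSimpleModule R M] :
    Nat.card M = Nat.card (ResidueField R) := by
  have := IsSimpleModule.nontrivial R M
  obtain ⟨x, hx⟩ := exists_ne (0 : M)
  have hspan : Submodule.span R {x} = ⊤ := by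
    rcases eq_bot_or_eq_top (Submodule.span R ({x} : Set M)) with h | h
    · exact absurd (by simpa using Submodule.span_le.mp h.le (Set.mem_singleton x)) hx
    · exact h
  set f := LinearMap.toSpanSingleton R M x with hf
  have hsurj : Function.Surjective f := by
    rw [← LinearMap.range_eq_top, ← LinearMap.span_singleton_eq_range, hspan]
  have e := f.quotKerEquivOfSurjective hsurj
  have hsimple : IsSimpleModule R (R ⧸ LinearMap.ker f) := IsSimpleModule.congr e
  have hco : IsCoatom (LinearMap.ker f) := isSimpleModule_iff_isCoatom.mp hsimple
  have hmax : Ideal.IsMaximal (LinearMap.ker f) := Ideal.isMaximal_def.mpr hco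
  have hk : LinearMap.ker f = maximalIdeal R := IsLocalRing.eq_maximalIdeal hmax
  rw [← Nat.card_congr e.toEquiv, hk]
  rfl

lemma aux (R : Type*) [CommRing R] [IsLocalRing R] [Finite (ResidueField R)]
    [Finite (Ideal R)] :
    ∀ (n : ℕ) (J : Ideal R), Nat.card {I : Ideal R // I ≤ J} = n →
      Nat.card J ≤ Nat.card (ResidueField R) ^ n := by
  have hq : 0 < Nat.card (ResidueField R) := Nat.card_pos
  intro n
  induction n using Nat.strong_induction_on with
  | _ n ih =>
    intro J hn
    rcases eq_or_ne J ⊥ with rfl | hJ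
    · have : Nat.card ↥(⊥ : Ideal R) = 1 := Nat.card_unique
      rw [this]
      exact Nat.one_le_pow _ _ hq
    · -- find a coatom below J
      have hs : ({I : Ideal R | I < J}).Finite := Set.toFinite _
      have hne : ({I : Ideal R | I < J}).Nonempty := ⟨⊥, bot_lt_iff_ne_bot.mpr hJ⟩
      obtain ⟨a, ha, hmax⟩ := hs.exists_maximalFor id _ hne
      have hcov : a ⋖ J := by
        refine ⟨ha, fun c hac hcJ => ?_⟩
        exact hac.not_ge (hmax hcJ hac.le)
      have hsimple : IsSimpleModule R (J ⧸ Submodule.comap J.subtype a) :=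
        (covBy_iff_quot_is_simple ha.le).mp hcov
      have hcard : Nat.card J =
          Nat.card (J ⧸ Submodule.comap J.subtype a) * Nat.card (Submodule.comap J.subtype a) := by
        rw [Submodule.card_eq_card_quotient_mul_card (Submodule.comap J.subtype a), mul_comm]
      have hKa : Nat.card (Submodule.comap J.subtype a) = Nat.card a :=
        Nat.card_congr (Submodule.comapSubtypeEquivOfLe ha.le).toEquiv
      -- cardinality of the ideal sets
      have hsub : {I : Ideal R | I ≤ a} ⊂ {I : Ideal R | I ≤ J} :=
        by
        refine ⟨fun I hI => ?_, fun h => ?_⟩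
        · exact le_trans (Set.mem_setOf.mp hI) ha.le
        · have hJa : J ∈ {I : Ideal R | I ≤ a} :=
            h (show J ∈ {I : Ideal R | I ≤ J} from le_refl J)
          exact ha.not_ge (Set.mem_setOf.mp hJa)
      have hlt : Nat.card {I : Ideal R // I ≤ a} < n := by
        rw [← hn]
        have h1 : Nat.card {I : Ideal R // I ≤ a} = ({I : Ideal R | I ≤ a}).ncard := rfl
        have h2 : Nat.card {I : Ideal R // I ≤ J} = ({I : Ideal R | I ≤ J}).ncard := rfl
        rw [h1, h2]
        exact Set.ncard_lt_ncard hsub (Set.toFinite _)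
      obtain ⟨m, hmn, hm⟩ : ∃ m, m < n ∧ Nat.card {I : Ideal R // I ≤ a} = m :=
        ⟨_, hlt, rfl⟩
      have ha' := ih m hmn a hm
      calc Nat.card J = Nat.card (J ⧸ Submodule.comap J.subtype a) * Nat.card a := by
            rw [hcard, hKa]
        _ = Nat.card (ResidueField R) * Nat.card a := by rw [simple_card R]
        _ ≤ Nat.card (ResidueField R) * Nat.card (ResidueField R) ^ m :=
            Nat.mul_le_mul_left _ ha'
        _ = Nat.card (ResidueField R) ^ (m + 1) := by ring
        _ ≤ Nat.card (ResidueField R) ^ n := Nat.pow_le_pow_right hq hmn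

/-- An Artinian local ring with residue field of cardinality `q` and finitely many
ideals satisfies `|m ^ i| ≤ q ^ N_i` for every positive `i`, where `N_i` is the
number of ideals contained in `m ^ i`. -/
theorem stmt6 (R : Type*) [CommRing R] [IsLocalRing R] [IsArtinianRing R]
    [Finite (ResidueField R)] [Finite (Ideal R)] (i : ℕ) (hi : 0 < i) :
    Nat.card ↥((maximalIdeal R) ^ i) ≤
      (Nat.card (ResidueField R)) ^ (Nat.card {I : Ideal R // I ≤ (maximalIdeal R) ^ i}) := by
  exact aux R _ _ rfl
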